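/- Let H be a separable complex Hilbert space, let p ≥ 1, and let x, y : ℤ → H form a pair of dual Riesz bases for H. For k ∈ Fin p and n ∈ ℤ define the forward-difference vectors z_{(k,n)} = ∑_{j=0}^{k} (−1)^{k−j} C(k,j) x_{pn+j} and the vectors w_{(k,n)} = ∑_{j=k}^{p−1} C(j,k) y_{pn+j}, where C(·,·) is the binomial coefficient. Then z : Fin p × ℤ → H is a Riesz basis for H with dual Riesz basis w; in particular, for every F ∈ H the family ((k,n) ↦ ⟨F, z_{(k,n)}⟩ w_{(k,n)}) has sum F (unconditional convergence in H). -/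

import Mathlib

noncomputable section
open scoped Classical

local notation "⟪" f ", " g "⟫" => @inner ℂ _ _ g f

/-- A family `x : ι → H` is a Riesz basis for `H` if it is the image of a Hilbert
(orthonormal) basis of `H` under a continuous linear equivalence of `H`. -/
def IsRieszBasis {H : Type*} [NormedAddCommGroup H] [InnerProductSpace ℂ H]
    {ι : Type*} (x : ι → H) : Prop :=
  ∃ (e : HilbertBasis ι ℂ H) (T : H ≃L[ℂ] H), ∀ i, x i = T (e i)

/-- Families `x, y : ι → H` form a pair of dual Riesz bases: both are Riesz bases,
they are biorthogonal, and `∑ᵢ ⟨f, yᵢ⟩ xᵢ = f` for every `f` (inner product linear in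
the first argument, conjugate-linear in the second). -/
def IsDualRieszBasisPair {H : Type*} [NormedAddCommGroup H] [InnerProductSpace ℂ H]
    {ι : Type*} (x y : ι → H) : Prop :=
  IsRieszBasis x ∧ IsRieszBasis y ∧
    (∀ i j, ⟪x i, y j⟫ = if i = j then (1 : ℂ) else 0) ∧
    ∀ f : H, HasSum (fun i => ⟪f, y i⟫ • x i) f


set_option linter.unusedSectionVars false

section comb
open Finset
lemma altsum (m : ℕ) : ∑ i ∈ range (m+1), (-1:ℂ)^i * (m.choose i) = if m = 0 then 1 else 0 := by
  have h := Int.alternating_sum_range_choose (n := m)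
  calc (∑ i ∈ range (m+1), (-1:ℂ)^i * (m.choose i))
      = ((∑ i ∈ range (m+1), (-1:ℤ)^i * (m.choose i) : ℤ) : ℂ) := by push_cast; rfl
    _ = _ := by rw [h]; split <;> simp

lemma negpow_sub {m i : ℕ} (h : i ≤ m) : (-1:ℂ)^(m-i) = (-1)^m * (-1)^i := by
  calc (-1:ℂ)^(m-i) = (-1)^(m-i) * ((-1)^i * (-1)^i) := by
        rw [← pow_add, ← two_mul, pow_mul]; norm_num
    _ = (-1)^(m-i+i) * (-1)^i := by rw [pow_add]; ring
    _ = (-1)^m * (-1)^i := by rw [Nat.sub_add_cancel h]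

lemma key1 (p k l : ℕ) (hk : k < p) :
    ∑ b ∈ range p, (-1:ℂ)^(k-b) * (k.choose b) * (b.choose l)
      = if k = l then 1 else 0 := by
  rw [← Finset.sum_subset (s₁ := Icc l k) (fun b hb => by
        simp only [mem_Icc] at hb; exact mem_range.2 (lt_of_le_of_lt hb.2 hk))
      (fun b _ hb => by
        simp only [mem_Icc, not_and_or, not_le] at hb
        rcases hb with h | h
        · simp [Nat.choose_eq_zero_of_lt h]
        · simp [Nat.choose_eq_zero_of_lt h])]
  rcases le_or_gt l k with hlk | hlk
  · rw [← Finset.Ico_add_one_right_eq_Icc, Finset.sum_Ico_eq_sum_range]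
    have hkl1 : k + 1 - l = (k - l) + 1 := by omega
    rw [hkl1]
    have : ∀ i ∈ range ((k-l)+1), (-1:ℂ)^(k-(l+i)) * (k.choose (l+i)) * ((l+i).choose l)
        = (k.choose l) * ((-1:ℂ)^(k-l) * ((-1:ℂ)^i * ((k-l).choose i))) := by
      intro i hi
      rw [mem_range] at hi
      have hi' : i ≤ k - l := by omega
      have hc : k.choose (l+i) * (l+i).choose l = k.choose l * (k-l).choose i := by
        have := Nat.choose_mul (n := k) (k := l + i) (s := l) (by omega)
        simpa using this
      have hsign : (-1:ℂ)^(k-(l+i)) = (-1:ℂ)^(k-l) * (-1:ℂ)^i := by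
        have h1 : k - (l+i) = (k-l) - i := by omega
        rw [h1, negpow_sub hi']
      have hc' : (k.choose (l+i) : ℂ) * ((l+i).choose l) = (k.choose l) * ((k-l).choose i) := by
        exact_mod_cast congrArg (Nat.cast : ℕ → ℂ) hc
      rw [hsign]
      linear_combination ((-1:ℂ)^(k-l) * (-1:ℂ)^i) * hc' 
    rw [Finset.sum_congr rfl this, ← Finset.mul_sum, ← Finset.mul_sum, altsum]
    rcases eq_or_ne k l with h | h
    · simp [h]
    · have : k - l ≠ 0 := by omega
      simp [h, this]
  · rw [Finset.Icc_eq_empty (by omega)]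
    have : k ≠ l := by omega
    simp [this]

lemma key2 (p k l : ℕ) (hk : k < p) :
    ∑ b ∈ range p, (k.choose b : ℂ) * (-1:ℂ)^(b-l) * (b.choose l)
      = if k = l then 1 else 0 := by
  rw [← Finset.sum_subset (s₁ := Icc l k) (fun b hb => by
        simp only [mem_Icc] at hb; exact mem_range.2 (lt_of_le_of_lt hb.2 hk))
      (fun b _ hb => by
        simp only [mem_Icc, not_and_or, not_le] at hb
        rcases hb with h | h
        · simp [Nat.choose_eq_zero_of_lt h]
        · simp [Nat.choose_eq_zero_of_lt h])]
  rcases le_or_gt l k with hlk | hlk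
  · rw [← Finset.Ico_add_one_right_eq_Icc, Finset.sum_Ico_eq_sum_range]
    have hkl1 : k + 1 - l = (k - l) + 1 := by omega
    rw [hkl1]
    have : ∀ i ∈ range ((k-l)+1), (k.choose (l+i) : ℂ) * (-1:ℂ)^(l+i-l) * ((l+i).choose l)
        = (k.choose l) * ((-1:ℂ)^i * ((k-l).choose i)) := by
      intro i hi
      rw [mem_range] at hi
      have hc : k.choose (l+i) * (l+i).choose l = k.choose l * (k-l).choose i := by
        have := Nat.choose_mul (n := k) (k := l + i) (s := l) (by omega)
        simpa using this
      have h1 : l + i - l = i := by omega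
      have hc' : (k.choose (l+i) : ℂ) * ((l+i).choose l) = (k.choose l) * ((k-l).choose i) := by
        exact_mod_cast congrArg (Nat.cast : ℕ → ℂ) hc
      rw [h1]
      linear_combination ((-1:ℂ)^i) * hc' 
    rw [Finset.sum_congr rfl this, ← Finset.mul_sum, altsum]
    rcases eq_or_ne k l with h | h
    · simp [h]
    · have : k - l ≠ 0 := by omega
      simp [h, this]
  · rw [Finset.Icc_eq_empty (by omega)]
    have : k ≠ l := by omega
    simp [this]

end comb

section core
variable {H : Type*} [NormedAddCommGroup H] [InnerProductSpace ℂ H] [CompleteSpace H]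

lemma emod_eq_iff {p a : ℕ} (ha : a < p) (m : ℤ) :
    m % (p:ℤ) = (a:ℤ) ↔ ∃ q : ℤ, m = (p:ℤ)*q + (a:ℤ) := by
  constructor
  · intro h
    refine ⟨m / (p:ℤ), ?_⟩
    rw [← h]
    exact (Int.mul_ediv_add_emod m p).symm
  · rintro ⟨q, rfl⟩
    rw [add_comm, Int.add_mul_emod_self_left]
    exact Int.emod_eq_of_lt (by positivity) (by exact_mod_cast ha)

lemma exists_rep {p : ℕ} (hp : 0 < p) (m : ℤ) :
    ∃ (a : Fin p) (n : ℤ), m = (p:ℤ) * n + ((a : ℕ) : ℤ) := by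
  have hp' : (0:ℤ) < (p:ℤ) := by exact_mod_cast hp
  have h0 : 0 ≤ m % (p:ℤ) := Int.emod_nonneg m (by omega)
  have h1 : m % (p:ℤ) < (p:ℤ) := Int.emod_lt_of_pos m hp'
  refine ⟨⟨(m % (p:ℤ)).toNat, ?_⟩, m / (p:ℤ), ?_⟩
  · omega
  · have : (((m % (p:ℤ)).toNat : ℕ) : ℤ) = m % (p:ℤ) := Int.toNat_of_nonneg h0
    rw [this]
    exact (Int.mul_ediv_add_emod m p).symm

lemma blk_inj {p : ℕ} {a b : Fin p} {n m : ℤ}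
    (h : (p:ℤ)*n + ((a:ℕ):ℤ) = (p:ℤ)*m + ((b:ℕ):ℤ)) : a = b ∧ n = m := by
  have hp : 0 < p := a.pos
  have ha : ((p:ℤ)*n + ((a:ℕ):ℤ)) % p = ((a:ℕ):ℤ) := (emod_eq_iff a.2 _).2 ⟨n, rfl⟩
  have hb : ((p:ℤ)*m + ((b:ℕ):ℤ)) % p = ((b:ℕ):ℤ) := (emod_eq_iff b.2 _).2 ⟨m, rfl⟩
  have hab : ((a:ℕ):ℤ) = ((b:ℕ):ℤ) := by rw [← ha, h, hb]
  have hab' : a = b := by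
    apply Fin.ext; exact_mod_cast hab
  refine ⟨hab', ?_⟩
  rw [hab] at h
  have : (p:ℤ) * n = (p:ℤ) * m := by omega
  have hp0 : (p:ℤ) ≠ 0 := by exact_mod_cast hp.ne'
  exact mul_left_cancel₀ hp0 this

variable (e : HilbertBasis ℤ ℂ H)

lemma dense_span_basis : Dense ((Submodule.span ℂ (Set.range e) : Submodule ℂ H) : Set H) :=
  Submodule.dense_iff_topologicalClosure_eq_top.2 e.dense_span

lemma clm_ext_basis {f g : H →L[ℂ] H} (h : ∀ m : ℤ, f (e m) = g (e m)) : f = g :=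
  ContinuousLinearMap.ext_on (dense_span_basis e) (by rintro _ ⟨m, rfl⟩; exact h m)

/-- The Hilbert basis shifted by `d`. -/
def shiftB (d : ℤ) : HilbertBasis ℤ ℂ H :=
  HilbertBasis.mk (e.orthonormal.comp (fun m => m + d) (add_left_injective d))
    (by
      have : Set.range (fun m : ℤ => e (m + d)) = Set.range e := by
        ext v
        constructor
        · rintro ⟨m, rfl⟩; exact ⟨m + d, rfl⟩
        · rintro ⟨m, rfl⟩; exact ⟨m - d, by simp⟩
      show ⊤ ≤ (Submodule.span ℂ (Set.range (fun m => e (m + d)))).topologicalClosure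
      rw [this, e.dense_span])

lemma shiftB_apply (d m : ℤ) : shiftB e d m = e (m + d) := by
  have := HilbertBasis.coe_mk (e.orthonormal.comp (fun m => m + d) (add_left_injective d))
  exact congrFun (this _) m

/-- The shift unitary `e m ↦ e (m + d)`. -/
def shiftIso (d : ℤ) : H ≃ₗᵢ[ℂ] H := e.repr.trans (shiftB e d).repr.symm

def shiftL (d : ℤ) : H →L[ℂ] H := (shiftIso e d).toLinearIsometry.toContinuousLinearMap

lemma shiftL_apply_basis (d m : ℤ) : shiftL e d (e m) = e (m + d) := by
  show (shiftB e d).repr.symm (e.repr (e m)) = e (m + d)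
  rw [e.repr_self, HilbertBasis.repr_symm_single, shiftB_apply]

lemma shiftL_comp (d : ℤ) : shiftL e d ∘L shiftL e (-d) = ContinuousLinearMap.id ℂ H := by
  apply clm_ext_basis
  intro m
  show shiftL e d (shiftL e (-d) (e m)) = e m
  rw [shiftL_apply_basis e, shiftL_apply_basis e]
  norm_num

lemma adjoint_shiftL (d : ℤ) :
    ContinuousLinearMap.adjoint (shiftL e d) = shiftL e (-d) := by
  symm
  rw [ContinuousLinearMap.eq_adjoint_iff]
  intro u v
  have h1 : ∀ w, shiftL e d (shiftL e (-d) w) = w := fun w =>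
    congrFun (congrArg (fun (f : H →L[ℂ] H) => ⇑f) (shiftL_comp e d)) w
  have h2 : @inner ℂ _ _ (shiftL e (-d) u) v
      = @inner ℂ _ _ (shiftL e d (shiftL e (-d) u)) (shiftL e d v) := by
    exact ((shiftIso e d).inner_map_map _ _).symm
  rw [h2, h1]


section proj
variable (p : ℕ)

/-- closed span of basis vectors with index ≡ k mod p -/
def resSub (k : Fin p) : Submodule ℂ H :=
  (Submodule.span ℂ (e '' {m : ℤ | m % (p:ℤ) = ((k:ℕ):ℤ)})).topologicalClosure

instance resSub_complete (k : Fin p) : CompleteSpace (resSub e p k) :=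
  (Submodule.isClosed_topologicalClosure _).completeSpace_coe

def projL (k : Fin p) : H →L[ℂ] H :=
  (resSub e p k).subtypeL ∘L Submodule.orthogonalProjectionOnto (resSub e p k)

lemma projL_apply (k : Fin p) (m : ℤ) :
    projL e p k (e m) = if m % (p:ℤ) = ((k:ℕ):ℤ) then e m else 0 := by
  split
  case isTrue h =>
    show (resSub e p k).starProjection (e m) = e m
    rw [Submodule.starProjection_eq_self_iff]
    exact Submodule.le_topologicalClosure _ (Submodule.subset_span ⟨m, h, rfl⟩)
  case isFalse h =>
    show ((Submodule.orthogonalProjectionOnto (resSub e p k) (e m)) : H) = 0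
    have hmem : e m ∈ (resSub e p k)ᗮ := by
      have hK : resSub e p k ≤ (ℂ ∙ (e m))ᗮ := by
        apply Submodule.topologicalClosure_minimal
        · rw [Submodule.span_le]
          rintro _ ⟨m', hm', rfl⟩
          rw [SetLike.mem_coe, Submodule.mem_orthogonal_singleton_iff_inner_right]
          have hne : m ≠ m' := by rintro rfl; exact h hm'
          exact e.orthonormal.2 hne
        · exact Submodule.isClosed_orthogonal _
      have h1 : e m ∈ ((ℂ ∙ (e m))ᗮ)ᗮ :=
        Submodule.le_orthogonal_orthogonal _ (Submodule.mem_span_singleton_self _)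
      exact Submodule.orthogonal_le hK h1
    have := Submodule.orthogonalProjectionOnto_apply_of_mem_orthogonal hmem
    rw [this]
    rfl

lemma adjoint_projL (k : Fin p) :
    ContinuousLinearMap.adjoint (projL e p k) = projL e p k :=
  (isSelfAdjoint_starProjection (resSub e p k)).adjoint_eq

/-- transfer operator `e (p n + k) ↦ e (p n + b)`, zero on other residue classes -/
def Qop (k b : Fin p) : H →L[ℂ] H :=
  shiftL e (((b:ℕ):ℤ) - ((k:ℕ):ℤ)) ∘L projL e p k

lemma Qop_apply (k b : Fin p) (m : ℤ) :
    Qop e p k b (e m)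
      = if m % (p:ℤ) = ((k:ℕ):ℤ) then e (m + (((b:ℕ):ℤ) - ((k:ℕ):ℤ))) else 0 := by
  show shiftL e _ (projL e p k (e m)) = _
  rw [projL_apply]
  split
  · rw [shiftL_apply_basis]
  · simp

lemma adjoint_Qop (k b : Fin p) :
    ContinuousLinearMap.adjoint (Qop e p k b) = Qop e p b k := by
  rw [Qop, ContinuousLinearMap.adjoint_comp, adjoint_projL, adjoint_shiftL]
  apply clm_ext_basis
  intro m
  show projL e p k (shiftL e _ (e m)) = Qop e p b k (e m)
  rw [shiftL_apply_basis, projL_apply, Qop_apply]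
  have hiff : (m + -(((b:ℕ):ℤ) - ((k:ℕ):ℤ))) % (p:ℤ) = ((k:ℕ):ℤ)
      ↔ m % (p:ℤ) = ((b:ℕ):ℤ) := by
    rw [emod_eq_iff k.2, emod_eq_iff b.2]
    constructor
    · rintro ⟨q, hq⟩; exact ⟨q, by omega⟩
    · rintro ⟨q, hq⟩; exact ⟨q, by omega⟩
  split
  case isTrue h =>
    rw [if_pos (hiff.1 h)]
    congr 1
    omega
  case isFalse h =>
    rw [if_neg (fun hh => h (hiff.2 hh))]


/-- block operator with matrix M acting on each block of p consecutive basis vectors -/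
def Sop (M : Fin p → Fin p → ℂ) : H →L[ℂ] H :=
  ∑ k : Fin p, ∑ b : Fin p, M k b • Qop e p k b

lemma Sop_apply (M : Fin p → Fin p → ℂ) (a : Fin p) (n : ℤ) :
    Sop e p M (e ((p:ℤ)*n + ((a:ℕ):ℤ)))
      = ∑ b : Fin p, M a b • e ((p:ℤ)*n + ((b:ℕ):ℤ)) := by
  set m : ℤ := (p:ℤ)*n + ((a:ℕ):ℤ) with hm
  have hmod : ∀ k : Fin p, (m % (p:ℤ) = ((k:ℕ):ℤ)) ↔ k = a := by
    intro k
    constructor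
    · intro h
      have ha : m % (p:ℤ) = ((a:ℕ):ℤ) := (emod_eq_iff a.2 _).2 ⟨n, rfl⟩
      apply Fin.ext
      have : ((k:ℕ):ℤ) = ((a:ℕ):ℤ) := by rw [← h, ha]
      exact_mod_cast this
    · rintro rfl
      exact (emod_eq_iff k.2 _).2 ⟨n, rfl⟩
  have h1 : Sop e p M (e m) = ∑ k : Fin p, ∑ b : Fin p, M k b •
      (if m % (p:ℤ) = ((k:ℕ):ℤ) then e (m + (((b:ℕ):ℤ) - ((k:ℕ):ℤ))) else 0) := by
    simp only [Sop, ContinuousLinearMap.sum_apply, ContinuousLinearMap.smul_apply, Qop_apply]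
  rw [h1]
  rw [Finset.sum_eq_single a]
  · apply Finset.sum_congr rfl
    intro b _
    rw [if_pos ((hmod a).2 rfl)]
    have hidx : m + (((b:ℕ):ℤ) - ((a:ℕ):ℤ)) = (p:ℤ)*n + ((b:ℕ):ℤ) := by rw [hm]; ring
    rw [hidx]
  · intro k _ hk
    have : ¬ (m % (p:ℤ) = ((k:ℕ):ℤ)) := fun h => hk ((hmod k).1 h)
    simp [this]
  · intro h
    exact absurd (Finset.mem_univ a) h

lemma Sop_comp (hp : 0 < p) (M N : Fin p → Fin p → ℂ)
    (h : ∀ a c : Fin p, ∑ b : Fin p, N a b * M b c = if a = c then 1 else 0) :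
    Sop e p M ∘L Sop e p N = ContinuousLinearMap.id ℂ H := by
  apply clm_ext_basis
  intro m
  obtain ⟨a, n, rfl⟩ := exists_rep hp m
  show Sop e p M (Sop e p N (e _)) = _
  rw [Sop_apply, map_sum]
  simp only [map_smul, Sop_apply, Finset.smul_sum]
  rw [Finset.sum_comm]
  have : ∀ c : Fin p, (∑ b : Fin p, N a b • (M b c • e ((p:ℤ)*n + ((c:ℕ):ℤ))))
      = (∑ b : Fin p, N a b * M b c) • e ((p:ℤ)*n + ((c:ℕ):ℤ)) := by
    intro c
    rw [Finset.sum_smul]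
    apply Finset.sum_congr rfl
    intro b _
    rw [smul_smul]
  rw [Finset.sum_congr rfl (fun c _ => this c)]
  simp only [h]
  have hsplit : ∀ c : Fin p, ((if a = c then (1:ℂ) else 0) • e ((p:ℤ)*n + ((c:ℕ):ℤ)))
      = if a = c then e ((p:ℤ)*n + ((c:ℕ):ℤ)) else 0 := by
    intro c; split <;> simp
  rw [Finset.sum_congr rfl (fun c _ => hsplit c), Finset.sum_ite_eq]
  simp

lemma adjoint_Sop (M : Fin p → Fin p → ℂ) :
    ContinuousLinearMap.adjoint (Sop e p M)
      = Sop e p (fun k b => (starRingEnd ℂ) (M b k)) := by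
  rw [Sop, map_sum]
  rw [Finset.sum_congr rfl (fun k _ => map_sum _ _ _)]
  simp only [map_smulₛₗ, adjoint_Qop]
  rw [Finset.sum_comm]
  rfl

end proj
end core

section pairB
variable {H : Type*} [NormedAddCommGroup H] [InnerProductSpace ℂ H] [CompleteSpace H]
variable {ι : Type*}

open ContinuousLinearMap in
lemma pairB (e' : HilbertBasis ι ℂ H) (T' : H ≃L[ℂ] H) (z w : ι → H)
    (hz : ∀ i, z i = T' (e' i))
    (hw : ∀ i, w i = adjoint (T'.symm : H →L[ℂ] H) (e' i)) :
    IsDualRieszBasisPair z w ∧ ∀ F : H, HasSum (fun i => ⟪F, z i⟫ • w i) F := by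
  have hTT : ∀ u : H, adjoint (T' : H →L[ℂ] H) (adjoint (T'.symm : H →L[ℂ] H) u) = u := by
    intro u
    apply ext_inner_right ℂ
    intro v
    rw [adjoint_inner_left, adjoint_inner_left]
    simp
  have hTT' : ∀ u : H, adjoint (T'.symm : H →L[ℂ] H) (adjoint (T' : H →L[ℂ] H) u) = u := by
    intro u
    apply ext_inner_right ℂ
    intro v
    rw [adjoint_inner_left, adjoint_inner_left]
    simp
  have hA : IsRieszBasis w := by
    refine ⟨e', ContinuousLinearEquiv.equivOfInverse
      (adjoint (T'.symm : H →L[ℂ] H)) (adjoint (T' : H →L[ℂ] H)) hTT hTT', fun i => ?_⟩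
    rw [hw i]; rfl
  have hbi : ∀ i j, @inner ℂ _ _ (w j) (z i) = if i = j then (1:ℂ) else 0 := by
    intro i j
    rw [hz i, hw j, adjoint_inner_left]
    have : (T'.symm : H →L[ℂ] H) (T' (e' i)) = e' i := by simp
    rw [this]
    have := orthonormal_iff_ite.1 e'.orthonormal j i
    rw [this]
    by_cases h : i = j <;> simp [h, eq_comm]
  have hcoeff : ∀ (f : H) (i : ι), @inner ℂ _ _ (w i) f = e'.repr (T'.symm f) i := by
    intro f i
    rw [hw i, adjoint_inner_left, e'.repr_apply_apply]
    rfl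
  refine ⟨⟨⟨e', T', hz⟩, hA, hbi, ?_⟩, ?_⟩
  · intro f
    have h1 := (e'.hasSum_repr (T'.symm f)).mapL (T' : H →L[ℂ] H)
    have h2 : ∀ i, (T' : H →L[ℂ] H) (e'.repr (T'.symm f) i • e' i)
        = @inner ℂ _ _ (w i) f • z i := by
      intro i
      rw [map_smul, hcoeff, hz i]; rfl
    have hTf : (T' : H →L[ℂ] H) (T'.symm f) = f := T'.apply_symm_apply f
    rw [hTf] at h1
    exact HasSum.congr_fun h1 (fun i => (h2 i).symm)
  · intro F
    have hgz : ∀ i, @inner ℂ _ _ (z i) F = e'.repr (adjoint (T' : H →L[ℂ] H) F) i := by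
      intro i
      rw [hz i, e'.repr_apply_apply, adjoint_inner_right]
      rfl
    have h1 := (e'.hasSum_repr (adjoint (T' : H →L[ℂ] H) F)).mapL
      (adjoint (T'.symm : H →L[ℂ] H))
    rw [hTT'] at h1
    refine HasSum.congr_fun h1 (fun i => ?_)
    rw [map_smul, hgz i, hw i]
end pairB

theorem stmt12 {H : Type*} [NormedAddCommGroup H] [InnerProductSpace ℂ H]
    [CompleteSpace H] [TopologicalSpace.SeparableSpace H]
    {p : ℕ} (hp : 1 ≤ p) (x y : ℤ → H) (hxy : IsDualRieszBasisPair x y)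
    (z w : Fin p × ℤ → H)
    (hz : ∀ (k : Fin p) (n : ℤ), z (k, n) =
      ∑ j ∈ Finset.range ((k : ℕ) + 1),
        ((-1 : ℂ) ^ ((k : ℕ) - j) * (Nat.choose k j : ℂ)) • x ((p : ℤ) * n + (j : ℤ)))
    (hw : ∀ (k : Fin p) (n : ℤ), w (k, n) =
      ∑ j ∈ Finset.Icc (k : ℕ) (p - 1),
        (Nat.choose j k : ℂ) • y ((p : ℤ) * n + (j : ℤ))) :
    IsDualRieszBasisPair z w ∧
      ∀ F : H, HasSum (fun i : Fin p × ℤ => ⟪F, z i⟫ • w i) F := by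
  classical
  obtain ⟨⟨e, T, hx⟩, hyR, hbi, hexp⟩ := hxy
  have hp0 : 0 < p := hp
  -- the dual basis is the image of `e` under the inverse adjoint
  have hy : ∀ i : ℤ, y i = ContinuousLinearMap.adjoint (T.symm : H →L[ℂ] H) (e i) := by
    intro i
    apply ext_inner_right ℂ
    intro v
    have h1 : HasSum (fun j => (inner ℂ (y j) v : ℂ) • e j) (T.symm v) := by
      have h0 : HasSum (fun j => (inner ℂ (y j) v : ℂ) • x j) v := hexp v
      have h2 := h0.mapL (T.symm : H →L[ℂ] H)
      refine HasSum.congr_fun h2 (fun j => ?_)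
      rw [map_smul, hx j]
      congr 1
      exact (T.symm_apply_apply (e j)).symm
    have h3 := h1.mapL (innerSL ℂ (e i))
    have h4 : (fun j => (innerSL ℂ (e i)) ((inner ℂ (y j) v : ℂ) • e j))
        = fun j => if j = i then (inner ℂ (y i) v : ℂ) else 0 := by
      funext j
      rw [innerSL_apply_apply, inner_smul_right]
      have horto := orthonormal_iff_ite.1 e.orthonormal i j
      rw [horto]
      by_cases h : i = j
      · subst h; simp
      · rw [if_neg h, if_neg (fun hh => h hh.symm)]
        simp
    rw [h4] at h3
    rw [ContinuousLinearMap.adjoint_inner_left]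
    exact (h3.unique (hasSum_ite_eq i _)).symm
  -- the product-indexed Hilbert basis
  have hinj : Function.Injective (fun i : Fin p × ℤ => (p:ℤ) * i.2 + ((i.1:ℕ):ℤ)) := by
    rintro ⟨a, n⟩ ⟨b, m⟩ h
    obtain ⟨h1, h2⟩ := blk_inj h
    rw [Prod.mk.injEq]
    exact ⟨h1, h2⟩
  have horth : Orthonormal ℂ (fun i : Fin p × ℤ => e ((p:ℤ) * i.2 + ((i.1:ℕ):ℤ))) :=
    e.orthonormal.comp _ hinj
  have hdense : ⊤ ≤ (Submodule.span ℂ (Set.range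
      (fun i : Fin p × ℤ => e ((p:ℤ) * i.2 + ((i.1:ℕ):ℤ))))).topologicalClosure := by
    have hr : Set.range (fun i : Fin p × ℤ => e ((p:ℤ) * i.2 + ((i.1:ℕ):ℤ)))
        = Set.range e := by
      ext v
      constructor
      · rintro ⟨⟨a, n⟩, rfl⟩; exact ⟨_, rfl⟩
      · rintro ⟨m, rfl⟩
        obtain ⟨a, n, rfl⟩ := exists_rep hp0 m
        exact ⟨(a, n), rfl⟩
    rw [hr, e.dense_span]
  set e' : HilbertBasis (Fin p × ℤ) ℂ H := HilbertBasis.mk horth hdense with he'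
  have he'app : ∀ (k : Fin p) (n : ℤ), e' (k, n) = e ((p:ℤ)*n + ((k:ℕ):ℤ)) := by
    intro k n
    rw [he']
    exact congrFun (HilbertBasis.coe_mk horth hdense) (k, n)
  -- the matrices
  set Mz : Fin p → Fin p → ℂ :=
    fun k b => (-1:ℂ)^((k:ℕ) - (b:ℕ)) * ((k:ℕ).choose (b:ℕ) : ℂ) with hMzd
  set Nz : Fin p → Fin p → ℂ := fun k b => ((k:ℕ).choose (b:ℕ) : ℂ) with hNzd
  set Uw : Fin p → Fin p → ℂ := fun k b => ((b:ℕ).choose (k:ℕ) : ℂ) with hUwd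
  have hMN : ∀ a c : Fin p, ∑ b : Fin p, Mz a b * Nz b c = if a = c then 1 else 0 := by
    intro a c
    have hk := key1 p (a:ℕ) (c:ℕ) a.2
    rw [← Fin.sum_univ_eq_sum_range
      (fun j => (-1:ℂ)^((a:ℕ)-j) * ((a:ℕ).choose j : ℂ) * ((j:ℕ).choose (c:ℕ) : ℂ)) p] at hk
    have heq : (∑ b : Fin p, Mz a b * Nz b c)
        = ∑ b : Fin p, (-1:ℂ)^((a:ℕ)-(b:ℕ)) * ((a:ℕ).choose (b:ℕ) : ℂ) * (((b:ℕ)).choose (c:ℕ) : ℂ) :=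
      Finset.sum_congr rfl (fun b _ => by rw [hMzd, hNzd]; try ring)
    rw [heq, hk]
    by_cases h : a = c
    · simp [h]
    · have h2 : (a:ℕ) ≠ (c:ℕ) := fun hh => h (Fin.ext hh)
      simp [h, h2]
  have hNM : ∀ a c : Fin p, ∑ b : Fin p, Nz a b * Mz b c = if a = c then 1 else 0 := by
    intro a c
    have hk := key2 p (a:ℕ) (c:ℕ) a.2
    rw [← Fin.sum_univ_eq_sum_range
      (fun j => ((a:ℕ).choose j : ℂ) * (-1:ℂ)^(j-(c:ℕ)) * ((j:ℕ).choose (c:ℕ) : ℂ)) p] at hk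
    have heq : (∑ b : Fin p, Nz a b * Mz b c)
        = ∑ b : Fin p, ((a:ℕ).choose (b:ℕ) : ℂ) * (-1:ℂ)^((b:ℕ)-(c:ℕ)) * (((b:ℕ)).choose (c:ℕ) : ℂ) :=
      Finset.sum_congr rfl (fun b _ => by rw [hMzd, hNzd]; try ring)
    rw [heq, hk]
    by_cases h : a = c
    · simp [h]
    · have h2 : (a:ℕ) ≠ (c:ℕ) := fun hh => h (Fin.ext hh)
      simp [h, h2]
  -- the block change-of-basis equivalence
  have hid1 : Sop e p Nz ∘L Sop e p Mz = ContinuousLinearMap.id ℂ H :=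
    Sop_comp e p hp0 Nz Mz hMN
  have hid2 : Sop e p Mz ∘L Sop e p Nz = ContinuousLinearMap.id ℂ H :=
    Sop_comp e p hp0 Mz Nz hNM
  have hL : Function.LeftInverse ⇑(Sop e p Nz) ⇑(Sop e p Mz) := fun v => by
    have := ContinuousLinearMap.ext_iff.1 hid1 v
    simpa using this
  have hR : Function.RightInverse ⇑(Sop e p Nz) ⇑(Sop e p Mz) := fun v => by
    have := ContinuousLinearMap.ext_iff.1 hid2 v
    simpa using this
  set SzE : H ≃L[ℂ] H :=
    ContinuousLinearEquiv.equivOfInverse (Sop e p Mz) (Sop e p Nz) hL hR with hSzE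
  set T' : H ≃L[ℂ] H := SzE.trans T with hT'
  -- z is the image of the product basis under T'
  have hze : ∀ i : Fin p × ℤ, z i = T' (e' i) := by
    rintro ⟨k, n⟩
    rw [he'app, hz k n]
    have hS : SzE (e ((p:ℤ)*n + ((k:ℕ):ℤ)))
        = ∑ b : Fin p, Mz k b • e ((p:ℤ)*n + ((b:ℕ):ℤ)) := Sop_apply e p Mz k n
    rw [hT', ContinuousLinearEquiv.trans_apply, hS, map_sum]
    have hterm : ∀ b : Fin p, T (Mz k b • e ((p:ℤ)*n + ((b:ℕ):ℤ)))
        = Mz k b • x ((p:ℤ)*n + ((b:ℕ):ℤ)) := by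
      intro b
      rw [map_smul, ← hx]
    rw [Finset.sum_congr rfl (fun b _ => hterm b)]
    rw [Fin.sum_univ_eq_sum_range (fun j => ((-1:ℂ)^((k:ℕ)-j) * ((k:ℕ).choose j : ℂ))
      • x ((p:ℤ)*n + (j:ℤ))) p]
    apply Finset.sum_subset
    · intro j hj
      rw [Finset.mem_range] at hj ⊢
      have hkp := k.isLt
      omega
    · intro j _ hj
      rw [Finset.mem_range, not_lt] at hj
      rw [Nat.choose_eq_zero_of_lt hj]
      simp
  -- w is the image of the product basis under the inverse adjoint of T'
  have hcoeT : (T'.symm : H →L[ℂ] H) = Sop e p Nz ∘L (T.symm : H →L[ℂ] H) := by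
    ext v
    rfl
  have hadjS : ContinuousLinearMap.adjoint (Sop e p Nz) = Sop e p Uw := by
    rw [adjoint_Sop]
    congr 1
    funext k b
    rw [hNzd, hUwd]
    simp
  have hadj : ContinuousLinearMap.adjoint (T'.symm : H →L[ℂ] H)
      = ContinuousLinearMap.adjoint (T.symm : H →L[ℂ] H) ∘L Sop e p Uw := by
    rw [hcoeT, ContinuousLinearMap.adjoint_comp, hadjS]
  have hwe : ∀ i : Fin p × ℤ, w i
      = ContinuousLinearMap.adjoint (T'.symm : H →L[ℂ] H) (e' i) := by
    rintro ⟨k, n⟩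
    rw [he'app, hadj, hw k n]
    rw [ContinuousLinearMap.comp_apply, Sop_apply, map_sum]
    have hterm : ∀ b : Fin p,
        ContinuousLinearMap.adjoint (T.symm : H →L[ℂ] H) (Uw k b • e ((p:ℤ)*n + ((b:ℕ):ℤ)))
        = (((b:ℕ).choose (k:ℕ) : ℂ)) • y ((p:ℤ)*n + ((b:ℕ):ℤ)) := by
      intro b
      rw [map_smul, ← hy, hUwd]
    rw [Finset.sum_congr rfl (fun b _ => hterm b)]
    rw [Fin.sum_univ_eq_sum_range (fun j => ((j:ℕ).choose (k:ℕ) : ℂ)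
      • y ((p:ℤ)*n + (j:ℤ))) p]
    apply Finset.sum_subset
    · intro j hj
      rw [Finset.mem_Icc] at hj
      rw [Finset.mem_range]
      omega
    · intro j hj hj2
      rw [Finset.mem_range] at hj
      rw [Finset.mem_Icc, not_and_or, not_le, not_le] at hj2
      have hjk : j < (k:ℕ) := by
        rcases hj2 with h | h
        · exact h
        · omega
      rw [Nat.choose_eq_zero_of_lt hjk]
      simp
  exact pairB e' T' z w hze hwe
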